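/- The image of the map ρ : (S²)³ → ℝ³ sending (v₁, v₂, v₃) to (⟨v₂,v₃⟩, ⟨v₃,v₁⟩, ⟨v₁,v₂⟩) equals the set D = {x ∈ ℝ³ : A(x) is positive semidefinite}, where A(x) is the symmetric matrix with unit diagonal and off-diagonal entries x₁, x₂, x₃. -/

import Mathlib

open scoped RealInnerProductSpace

open Matrix in
lemma inner_euc (v w : EuclideanSpace ℝ (Fin 3)) : ⟪v, w⟫ = ∑ i, v i * w i := by
  simp [PiLp.inner_apply, mul_comm]

theorem range_gram_map_eq_posSemidef_set :
    (Set.range fun p :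
        ({v : EuclideanSpace ℝ (Fin 3) // ‖v‖ = 1} ×
         {v : EuclideanSpace ℝ (Fin 3) // ‖v‖ = 1} ×
         {v : EuclideanSpace ℝ (Fin 3) // ‖v‖ = 1}) =>
      ((⟪p.2.1.val, p.2.2.val⟫ : ℝ), (⟪p.2.2.val, p.1.val⟫ : ℝ),
        (⟪p.1.val, p.2.1.val⟫ : ℝ)))
      = {x : ℝ × ℝ × ℝ |
          (!![1, x.2.2, x.2.1; x.2.2, 1, x.1; x.2.1, x.1, 1] :
            Matrix (Fin 3) (Fin 3) ℝ).PosSemidef} := by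
  ext x
  constructor
  · rintro ⟨⟨v₁, v₂, v₃⟩, rfl⟩
    set u : Fin 3 → EuclideanSpace ℝ (Fin 3) := ![v₁.val, v₂.val, v₃.val] with hu
    set B : Matrix (Fin 3) (Fin 3) ℝ := Matrix.of fun i j => u j i with hBdef
    have hg : ∀ a b : Fin 3, (B.conjTranspose * B) a b = ⟪u a, u b⟫ := by
      intro a b
      simp [Matrix.mul_apply, inner_euc, B, mul_comm]
    have hsq : ∀ v : {v : EuclideanSpace ℝ (Fin 3) // ‖v‖ = 1},
        (⟪v.val, v.val⟫ : ℝ) = 1 := by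
      intro v
      rw [real_inner_self_eq_norm_sq, v.prop]; norm_num
    show Matrix.PosSemidef _
    have : (!![1, (⟪v₁.val, v₂.val⟫:ℝ), ⟪v₃.val, v₁.val⟫; ⟪v₁.val, v₂.val⟫, 1, ⟪v₂.val, v₃.val⟫;
        ⟪v₃.val, v₁.val⟫, ⟪v₂.val, v₃.val⟫, 1] : Matrix (Fin 3) (Fin 3) ℝ) = B.conjTranspose * B := by
      ext a b
      rw [hg]
      fin_cases a <;> fin_cases b <;>
        simp [u, hsq, real_inner_comm, inner_euc, mul_comm, v₁.prop, v₂.prop, v₃.prop]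
    rw [this]
    exact Matrix.posSemidef_conjTranspose_mul_self B
  · intro hx
    obtain ⟨B, hB⟩ : ∃ B : Matrix (Fin 3) (Fin 3) ℝ, _ = B.conjTranspose * B := by
      open MatrixOrder in
      exact CStarAlgebra.nonneg_iff_eq_star_mul_self.mp (show Matrix.PosSemidef _ from hx).nonneg
    set w : Fin 3 → EuclideanSpace ℝ (Fin 3) := fun j => WithLp.toLp 2 (fun i => B i j)
    have hinner : ∀ a b : Fin 3, ⟪w a, w b⟫ =
        (!![1, x.2.2, x.2.1; x.2.2, 1, x.1; x.2.1, x.1, 1] : Matrix (Fin 3) (Fin 3) ℝ) a b := by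
      intro a b
      rw [hB]
      simp [inner_euc, Matrix.mul_apply, w, mul_comm]
    have hnorm : ∀ a : Fin 3, ‖w a‖ = 1 := by
      intro a
      have h1 : (⟪w a, w a⟫ : ℝ) = 1 := by
        rw [hinner]; fin_cases a <;> simp
      have := real_inner_self_eq_norm_sq (w a)
      nlinarith [norm_nonneg (w a)]
    refine ⟨⟨⟨w 0, hnorm 0⟩, ⟨w 1, hnorm 1⟩, ⟨w 2, hnorm 2⟩⟩, ?_⟩
    have h12 := hinner 1 2
    have h20 := hinner 2 0
    have h01 := hinner 0 1
    simp only [Matrix.of_apply, Matrix.cons_val', Matrix.cons_val_zero, Matrix.cons_val_one, Matrix.head_cons,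
      Matrix.head_fin_const, Matrix.cons_val_fin_one, Matrix.empty_val',
      Matrix.cons_val_two, Matrix.tail_cons] at h12 h20 h01
    simp [h12, h20, h01]
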